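/- Let M > 1, c = 2M/(M + 1), and let k₀ : ℝ → ℝ be the 2π-periodic function with k₀(θ) = 1 for θ ∈ [0, cπ/2) ∪ [π, π + cπ/2) and k₀(θ) = M otherwise on [0, 2π). Then (1/(2π)) ∫₀^{2π} k₀(θ) dθ = c. Consequently, for the Beltrami coefficient μ₀(z) = ((1 − k₀(arg z))/(1 + k₀(arg z))) z z̄⁻¹ and for every circle S_ρ(0) of radius ρ > 0 centered at the origin, the average over S_ρ(0) of K_{μ₀} − 2(|μ₀| + Re(μ₀ n̄²))/(1 − |μ₀|²) equals c, where n = n(ξ) = ξ/|ξ| is the outer unit normal at ξ ∈ S_ρ(0) and K_{μ₀} = (1 + |μ₀|)/(1 − |μ₀|). -/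

import Mathlib

open Real Set

private lemma ae_eq_on_Ioc {f : ℝ → ℝ} {C a b : ℝ} (hab : a ≤ b)
    (h : ∀ x ∈ Ico a b, f x = C) :
    ∀ᵐ x : ℝ, x ∈ Ioc a b → f x = C := by
  have h0 : ∀ᵐ x : ℝ, x ≠ b := by
    refine MeasureTheory.ae_iff.mpr ?_
    simpa using MeasureTheory.measure_singleton (μ := MeasureTheory.volume) b
  filter_upwards [h0] with x hx hmem
  exact h x ⟨le_of_lt hmem.1, lt_of_le_of_ne hmem.2 hx⟩

private lemma piece_int {f : ℝ → ℝ} {C a b : ℝ} (hab : a ≤ b)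
    (h : ∀ x ∈ Ico a b, f x = C) :
    ∫ x in a..b, f x = C * (b - a) := by
  have h1 : ∀ᵐ x : ℝ, x ∈ Set.uIoc a b → f x = C := by
    rw [Set.uIoc_of_le hab]; exact ae_eq_on_Ioc hab h
  rw [intervalIntegral.integral_congr_ae h1, intervalIntegral.integral_const,
    smul_eq_mul, mul_comm]

private lemma piece_ii {f : ℝ → ℝ} {C a b : ℝ} (hab : a ≤ b)
    (h : ∀ x ∈ Ico a b, f x = C) :
    IntervalIntegrable f MeasureTheory.volume a b := by
  rw [intervalIntegrable_iff_integrableOn_Ioc_of_le hab]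
  have : MeasureTheory.IntegrableOn (fun _ : ℝ => C) (Ioc a b) := by
    exact MeasureTheory.integrableOn_const measure_Ioc_lt_top.ne
  refine this.congr ?_
  refine (MeasureTheory.ae_restrict_iff' measurableSet_Ioc).mpr ?_
  filter_upwards [ae_eq_on_Ioc hab h] with x hx hmem
  exact (hx hmem).symm

/-- Let `M > 1`, `c = 2M/(M+1)`, and let `k₀` be the `2π`-periodic
function with `k₀ = 1` on `[0, cπ/2) ∪ [π, π + cπ/2)` and `k₀ = M` elsewhere on
`[0, 2π)`. Then `(1/(2π)) ∫₀^{2π} k₀ = c`, and for the Beltrami coefficient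
`μ₀(z) = ((1 − k₀(arg z))/(1 + k₀(arg z))) z z̄⁻¹` and every circle of radius
`ρ > 0` centered at the origin, the average over the circle of
`K_{μ₀} − 2(|μ₀| + Re(μ₀ n̄²))/(1 − |μ₀|²)` equals `c`, where `n(ξ) = ξ/|ξ|`. -/
theorem sharp_example_average (M c : ℝ) (hM : 1 < M) (hc : c = 2 * M / (M + 1))
    (k₀ : ℝ → ℝ)
    (hk₀per : Function.Periodic k₀ (2 * π))
    (hk₀1 : ∀ θ ∈ Ico 0 (c * π / 2) ∪ Ico π (π + c * π / 2), k₀ θ = 1)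
    (hk₀M : ∀ θ ∈ Ico (0 : ℝ) (2 * π),
      θ ∉ Ico 0 (c * π / 2) ∪ Ico π (π + c * π / 2) → k₀ θ = M)
    (μ₀ : ℂ → ℂ)
    (hμ₀ : ∀ z : ℂ, μ₀ z =
      (((1 - k₀ z.arg) / (1 + k₀ z.arg) : ℝ) : ℂ) * z * (starRingEnd ℂ z)⁻¹)
    (g : ℂ → ℝ)
    (hg : ∀ ξ : ℂ, ξ ≠ 0 → g ξ =
      (1 + ‖μ₀ ξ‖) / (1 - ‖μ₀ ξ‖) -
        2 * (‖μ₀ ξ‖ +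
          (μ₀ ξ * (starRingEnd ℂ (ξ / (↑‖ξ‖ : ℂ))) ^ 2).re) /
            (1 - ‖μ₀ ξ‖ ^ 2)) :
    (1 / (2 * π)) * (∫ θ in (0 : ℝ)..(2 * π), k₀ θ) = c ∧
    ∀ ρ : ℝ, 0 < ρ →
      (1 / (2 * π)) * (∫ t in (0 : ℝ)..(2 * π), g ((ρ : ℂ) * Complex.exp (t * Complex.I))) = c := by
  have hπ : 0 < π := Real.pi_pos
  have hM1 : (0:ℝ) < M + 1 := by linarith
  have hc1 : 1 < c := by rw [hc, lt_div_iff₀ hM1]; linarith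
  have hc2 : c < 2 := by rw [hc, div_lt_iff₀ hM1]; linarith
  -- interval endpoints
  have h01 : (0:ℝ) ≤ c * π / 2 := by positivity
  have h12 : c * π / 2 ≤ π := by nlinarith
  have h23 : π ≤ π + c * π / 2 := by nlinarith
  have h34 : π + c * π / 2 ≤ 2 * π := by nlinarith
  -- k₀ values on the four pieces
  have hv1 : ∀ x ∈ Ico (0:ℝ) (c * π / 2), k₀ x = 1 := fun x hx =>
    hk₀1 x (Or.inl hx)
  have hv2 : ∀ x ∈ Ico (c * π / 2) π, k₀ x = M := by
    intro x hx
    refine hk₀M x ⟨le_trans h01 hx.1, lt_of_lt_of_le hx.2 (by linarith)⟩ ?_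
    rintro (h | h)
    · exact absurd hx.1 (not_le.mpr h.2)
    · exact absurd hx.2 (not_lt.mpr h.1)
  have hv3 : ∀ x ∈ Ico π (π + c * π / 2), k₀ x = 1 := fun x hx =>
    hk₀1 x (Or.inr hx)
  have hv4 : ∀ x ∈ Ico (π + c * π / 2) (2 * π), k₀ x = M := by
    intro x hx
    refine hk₀M x ⟨le_trans (le_trans h01 (le_trans h12 h23)) hx.1, hx.2⟩ ?_
    rintro (h | h)
    · exact absurd (lt_of_lt_of_le (lt_of_lt_of_le h.2 (le_trans h12 h23)) hx.1) (lt_irrefl x)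
    · exact absurd hx.1 (not_le.mpr h.2)
  -- the integral of k₀
  have hint : ∫ θ in (0:ℝ)..(2 * π), k₀ θ = c * π + M * (2 * π - c * π) := by
    have e1 := piece_int h01 hv1
    have e2 := piece_int h12 hv2
    have e3 := piece_int h23 hv3
    have e4 := piece_int h34 hv4
    have i1 := piece_ii h01 hv1
    have i2 := piece_ii h12 hv2
    have i3 := piece_ii h23 hv3
    have i4 := piece_ii h34 hv4
    have s12 := intervalIntegral.integral_add_adjacent_intervals i1 i2
    have s123 := intervalIntegral.integral_add_adjacent_intervals (i1.trans i2) i3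
    have s1234 := intervalIntegral.integral_add_adjacent_intervals ((i1.trans i2).trans i3) i4
    rw [← s1234, ← s123, ← s12, e1, e2, e3, e4]
    ring
  have hπne : π ≠ 0 := ne_of_gt hπ
  have part1 : (1 / (2 * π)) * (∫ θ in (0 : ℝ)..(2 * π), k₀ θ) = c := by
    rw [hint, hc]
    field_simp
    ring
  -- k₀ takes only values 1 or M
  have hk_vals : ∀ t : ℝ, k₀ t = 1 ∨ k₀ t = M := by
    intro t
    have h2π : (0:ℝ) < 2 * π := by linarith
    have hmem := toIcoMod_mem_Ico' h2π t
    have heq : k₀ (toIcoMod h2π 0 t) = k₀ t := by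
      rw [← self_sub_toIcoDiv_zsmul h2π 0 t, hk₀per.sub_zsmul_eq]
    by_cases hS : toIcoMod h2π 0 t ∈ Ico 0 (c * π / 2) ∪ Ico π (π + c * π / 2)
    · left; rw [← heq]; exact hk₀1 _ hS
    · right; rw [← heq]; exact hk₀M _ hmem hS
  refine ⟨part1, ?_⟩
  intro ρ hρ
  -- pointwise identity g (ρ e^{it}) = k₀ t
  have key : ∀ t : ℝ, g ((ρ : ℂ) * Complex.exp (t * Complex.I)) = k₀ t := by
    intro t
    set ξ : ℂ := (ρ : ℂ) * Complex.exp (t * Complex.I) with hξdef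
    have hexp : Complex.exp ((t : ℂ) * Complex.I) ≠ 0 := Complex.exp_ne_zero _
    have hρne : (ρ : ℂ) ≠ 0 := by exact_mod_cast ne_of_gt hρ
    have hξ : ξ ≠ 0 := mul_ne_zero hρne hexp
    -- arg ξ relates to t
    have harg : k₀ ξ.arg = k₀ t := by
      rw [hξdef, Complex.arg_real_mul _ hρ, Complex.arg_exp_mul_I]
      rw [← self_sub_toIocDiv_zsmul (mul_pos two_pos Real.pi_pos) (-π) t,
        hk₀per.sub_zsmul_eq]
    set k : ℝ := k₀ t with hkdef
    have hkpos : (0:ℝ) < k := by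
      rcases hk_vals t with h | h <;> rw [hkdef, h] <;> linarith
    have hk1c : (1 + (k:ℂ)) ≠ 0 := by
      have h' : (1:ℝ) + k ≠ 0 := by positivity
      exact_mod_cast h'
    set r : ℝ := (1 - k) / (1 + k) with hrdef
    -- μ₀ ξ * n̄² = r
    have hconjne : (starRingEnd ℂ) ξ ≠ 0 := by
      simpa using hξ
    have habsne : (↑‖ξ‖ : ℂ) ≠ 0 := by
      exact_mod_cast norm_ne_zero_iff.mpr hξ
    have hmulconj : ξ * (starRingEnd ℂ) ξ = (↑‖ξ‖ : ℂ) ^ 2 := by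
      rw [Complex.mul_conj]
      norm_cast
      rw [← Complex.sq_norm]
    have hprod : μ₀ ξ * (starRingEnd ℂ (ξ / (↑‖ξ‖ : ℂ))) ^ 2 = (r : ℂ) := by
      rw [hμ₀ ξ, harg, map_div₀, hrdef]
      have : (starRingEnd ℂ) ((↑‖ξ‖ : ℂ)) = (↑‖ξ‖ : ℂ) := by
        rw [Complex.conj_ofReal]
      rw [this, Complex.ofReal_div]
      rw [div_pow, ← hmulconj]
      field_simp
    have habs : ‖μ₀ ξ‖ = |r| := by
      rw [hμ₀ ξ, harg, hrdef]
      rw [norm_mul, norm_mul, norm_inv, Complex.norm_conj, Complex.norm_real, Real.norm_eq_abs]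
      rw [mul_assoc, mul_inv_cancel₀ (norm_ne_zero_iff.mpr hξ), mul_one]
    have hre : (μ₀ ξ * (starRingEnd ℂ (ξ / (↑‖ξ‖ : ℂ))) ^ 2).re = r := by
      rw [hprod, Complex.ofReal_re]
    rw [hg ξ hξ, habs, hre]
    rcases hk_vals t with hk1 | hkM
    · have hk1' : k = 1 := hkdef.trans hk1
      rw [hrdef, hk1']
      norm_num
    · have hkM' : k = M := hkdef.trans hkM
      have hMe : M + 1 ≠ 0 := ne_of_gt hM1
      have hrM : r = (1 - M) / (1 + M) := by rw [hrdef, hkM']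
      have hflip : (1 - M) / (1 + M) = -((M - 1) / (M + 1)) := by
        rw [add_comm 1 M, ← neg_div, neg_sub]
      have hxpos : 0 < (M - 1) / (M + 1) := div_pos (by linarith) hM1
      have habsr : |r| = (M - 1) / (M + 1) := by
        rw [hrM, hflip, abs_neg, abs_of_pos hxpos]
      have hx1 : 1 + (M - 1) / (M + 1) = 2 * M / (M + 1) := by
        rw [eq_div_iff hMe, add_mul, div_mul_cancel₀ _ hMe]; ring
      have hx2 : 1 - (M - 1) / (M + 1) = 2 / (M + 1) := by
        rw [eq_div_iff hMe, sub_mul, div_mul_cancel₀ _ hMe]; ring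
      have hd2 : 2 / (M + 1) ≠ 0 := by positivity
      have e1 : (1 + (M - 1) / (M + 1)) / (1 - (M - 1) / (M + 1)) = M := by
        rw [hx1, hx2, div_eq_iff hd2]; ring
      have e2 : (M - 1) / (M + 1) + (1 - M) / (1 + M) = 0 := by
        rw [hflip]; ring
      rw [habsr, hrM, hkM', e1, e2]
      simp
  have : (∫ t in (0 : ℝ)..(2 * π), g ((ρ : ℂ) * Complex.exp (t * Complex.I)))
      = ∫ θ in (0 : ℝ)..(2 * π), k₀ θ := by
    apply intervalIntegral.integral_congr
    intro t _
    exact key t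
  rw [this]
  exact part1
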